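/- The downlink and the dual uplink admission-control problems have equal optimal values: the infimum of Σ_{i=1}^N x_i over all p ∈ ℝ^N with p ≥ 0, unit-norm beamformers u_1,…,u_N ∈ ℂ^M, and x ∈ ℝ^N with x ≥ 0 satisfying, for every i, (p_i/M)|h_i^H u_i|² ≥ (γ_i/(1+x_i))·(Σ_{j≠i}(p_j/M)|h_i^H u_j|² + n_i) and (1/M)Σ_{i=1}^N w_i p_i ≤ P, equals the infimum of Σ_{i=1}^N x_i over all q ∈ ℝ^N with q ≥ 0, unit-norm u_1,…,u_N ∈ ℂ^M, and x ≥ 0 satisfying, for every i, (q_i/M)|u_i^H h_i|² ≥ (γ_i/(1+x_i))·(Σ_{j≠i}(q_j/M)|u_i^H h_j|² + w_i) and (1/M)Σ_{i=1}^N n_i q_i ≤ P. -/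

import Mathlib

open Matrix Finset

open Filter

noncomputable def iterSeq {N : ℕ} (A : Fin N → Fin N → ℝ) (w : Fin N → ℝ) : ℕ → Fin N → ℝ
  | 0 => fun _ => 0
  | k+1 => fun i => (∑ j, A j i * iterSeq A w k j) + w i

lemma feas_transfer {N : ℕ} (G : Fin N → Fin N → ℝ) (δ nn ww : Fin N → ℝ) (C : ℝ)
    (hG : ∀ i j, 0 ≤ G i j) (hδ : ∀ i, 0 < δ i) (hnn : ∀ i, 0 < nn i)
    (hww : ∀ i, 0 ≤ ww i)
    (p : Fin N → ℝ) (hp : ∀ i, 0 ≤ p i)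
    (hfeas : ∀ i, p i * G i i ≥ δ i * ((∑ j ∈ Finset.univ.erase i, G i j * p j) + nn i))
    (hpow : ∑ i, ww i * p i ≤ C) :
    ∃ q : Fin N → ℝ, (∀ i, 0 ≤ q i) ∧
      (∀ i, q i * G i i ≥ δ i * ((∑ j ∈ Finset.univ.erase i, G j i * q j) + ww i)) ∧
      ∑ i, nn i * q i ≤ C := by
  -- diagonal gains positive
  have hGpos : ∀ i, 0 < G i i := by
    intro i
    have hS : 0 ≤ ∑ j ∈ Finset.univ.erase i, G i j * p j :=
      Finset.sum_nonneg fun j _ => mul_nonneg (hG i j) (hp j)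
    have h1 : 0 < δ i * ((∑ j ∈ Finset.univ.erase i, G i j * p j) + nn i) := by
      apply mul_pos (hδ i); linarith [hnn i]
    have h2 : 0 < p i * G i i := lt_of_lt_of_le h1 (hfeas i)
    by_contra hc
    push_neg at hc
    nlinarith [hp i]
  set A : Fin N → Fin N → ℝ := fun i j => if j = i then 0 else δ i * G i j / G i i with hA
  set b : Fin N → ℝ := fun i => δ i * nn i / G i i with hb
  have hAnn : ∀ i j, 0 ≤ A i j := by
    intro i j; simp only [hA]
    split
    · exact le_refl 0
    · exact div_nonneg (mul_nonneg (hδ i).le (hG i j)) (hGpos i).le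
  have hbpos : ∀ i, 0 < b i := fun i => div_pos (mul_pos (hδ i) (hnn i)) (hGpos i)
  -- downlink feasibility in normalized form
  have hpA : ∀ i, (∑ j, A i j * p j) + b i ≤ p i := by
    intro i
    have hAi : ∑ j, A i j * p j = ∑ j ∈ Finset.univ.erase i, A i j * p j := by
      rw [← Finset.sum_erase_add Finset.univ _ (Finset.mem_univ i)]
      simp [hA]
    have hAe : ∑ j ∈ Finset.univ.erase i, A i j * p j
        = (δ i * ∑ j ∈ Finset.univ.erase i, G i j * p j) / G i i := by
      rw [Finset.mul_sum, Finset.sum_div]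
      refine Finset.sum_congr rfl fun j hj => ?_
      simp only [Finset.mem_erase] at hj
      simp only [hA, if_neg hj.1]
      ring
    rw [hAi, hAe, hb]
    rw [← add_div, div_le_iff₀ (hGpos i)]
    nlinarith [hfeas i]
  set q0 : ℕ → Fin N → ℝ := iterSeq A ww with hq0
  have hstep : ∀ k i, q0 (k+1) i = (∑ j, A j i * q0 k j) + ww i := fun k i => rfl
  have hzero : ∀ i, q0 0 i = 0 := fun i => rfl
  have hnonneg : ∀ k i, 0 ≤ q0 k i := by
    intro k
    induction k with
    | zero => intro i; rw [hzero]
    | succ m ih =>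
      intro i
      rw [hstep]
      have : 0 ≤ ∑ j, A j i * q0 m j :=
        Finset.sum_nonneg fun j _ => mul_nonneg (hAnn j i) (ih j)
      linarith [hww i]
  have hmonostep : ∀ k i, q0 k i ≤ q0 (k+1) i := by
    intro k
    induction k with
    | zero =>
      intro i
      rw [hzero]
      exact hnonneg 1 i
    | succ m ih =>
      intro i
      rw [hstep, hstep]
      have : ∑ j, A j i * q0 m j ≤ ∑ j, A j i * q0 (m+1) j :=
        Finset.sum_le_sum fun j _ => mul_le_mul_of_nonneg_left (ih j) (hAnn j i)
      linarith
  have hmono : ∀ i, Monotone fun k => q0 k i :=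
    fun i => monotone_nat_of_le_succ fun k => hmonostep k i
  -- budget bound along the iteration
  have hbound : ∀ k, ∑ i, b i * q0 k i ≤ ∑ i, ww i * p i := by
    intro k
    have step1 : ∑ i, b i * q0 k i ≤ ∑ i, (p i - ∑ j, A i j * p j) * q0 k i := by
      refine Finset.sum_le_sum fun i _ => ?_
      exact mul_le_mul_of_nonneg_right (by linarith [hpA i]) (hnonneg k i)
    have step2 : ∑ i, (p i - ∑ j, A i j * p j) * q0 k i
        = (∑ i, p i * q0 k i) - ∑ j, p j * (q0 (k+1) j - ww j) := by
      have swap : ∑ i, (∑ j, A i j * p j) * q0 k i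
          = ∑ j, p j * (q0 (k+1) j - ww j) := by
        have e1 : ∀ i, (∑ j, A i j * p j) * q0 k i = ∑ j, A i j * q0 k i * p j := by
          intro i; rw [Finset.sum_mul]; exact Finset.sum_congr rfl fun j _ => by ring
        calc ∑ i, (∑ j, A i j * p j) * q0 k i
            = ∑ i, ∑ j, A i j * q0 k i * p j := Finset.sum_congr rfl fun i _ => e1 i
          _ = ∑ j, ∑ i, A i j * q0 k i * p j := Finset.sum_comm
          _ = ∑ j, p j * (q0 (k+1) j - ww j) := by
              refine Finset.sum_congr rfl fun j _ => ?_
              rw [hstep]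
              rw [show (∑ i, A i j * q0 k i * p j) = (∑ i, A i j * q0 k i) * p j from
                (Finset.sum_mul ..).symm]
              ring_nf
      rw [← swap, ← Finset.sum_sub_distrib]
      exact Finset.sum_congr rfl fun i _ => by ring
    have step3 : (∑ i, p i * q0 k i) - (∑ j, p j * (q0 (k+1) j - ww j)) ≤ ∑ i, ww i * p i := by
      have e : (∑ i, p i * q0 k i) - (∑ j, p j * (q0 (k+1) j - ww j))
          = ∑ i, (p i * q0 k i - p i * q0 (k+1) i + ww i * p i) := by
        rw [← Finset.sum_sub_distrib]
        refine Finset.sum_congr rfl fun i _ => by ring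
      rw [e]
      refine Finset.sum_le_sum fun i _ => ?_
      have := mul_le_mul_of_nonneg_left (hmonostep k i) (hp i)
      linarith
    linarith
  -- componentwise upper bound, supremum, and fixed point
  set W : ℝ := ∑ i, ww i * p i with hW
  have hbdd : ∀ i, BddAbove (Set.range fun k => q0 k i) := by
    intro i
    refine ⟨W / b i, ?_⟩
    rintro y ⟨k, rfl⟩
    have h1 : b i * q0 k i ≤ ∑ j, b j * q0 k j := by
      refine Finset.single_le_sum (fun j _ => mul_nonneg (hbpos j).le (hnonneg k j))
        (Finset.mem_univ i)
    have h2 : b i * q0 k i ≤ W := le_trans h1 (hbound k)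
    rw [le_div_iff₀ (hbpos i)]
    linarith [h2]
  set L : Fin N → ℝ := fun i => ⨆ k, q0 k i with hL
  have hLt : ∀ i, Tendsto (fun k => q0 k i) atTop (nhds (L i)) :=
    fun i => tendsto_atTop_ciSup (hmono i) (hbdd i)
  have hLnn : ∀ i, 0 ≤ L i := by
    intro i
    have := le_ciSup (hbdd i) 0
    rw [hzero] at this
    exact this
  have hLfix : ∀ i, L i = (∑ j, A j i * L j) + ww i := by
    intro i
    have t1 : Tendsto (fun k => q0 (k+1) i) atTop (nhds (L i)) :=
      (hLt i).comp (tendsto_add_atTop_nat 1)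
    have t2 : Tendsto (fun k => (∑ j, A j i * q0 k j) + ww i) atTop
        (nhds ((∑ j, A j i * L j) + ww i)) := by
      refine Tendsto.add ?_ tendsto_const_nhds
      exact tendsto_finset_sum _ fun j _ => (hLt j).const_mul _
    have : (fun k => q0 (k+1) i) = fun k => (∑ j, A j i * q0 k j) + ww i := by
      funext k; exact hstep k i
    rw [this] at t1
    exact tendsto_nhds_unique t1 t2
  have hLbud : ∑ i, b i * L i ≤ C := by
    have t : Tendsto (fun k => ∑ i, b i * q0 k i) atTop (nhds (∑ i, b i * L i)) :=
      tendsto_finset_sum _ fun i _ => (hLt i).const_mul _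
    have : ∑ i, b i * L i ≤ W := le_of_tendsto t (Eventually.of_forall hbound)
    linarith [hpow]
  refine ⟨fun i => δ i * L i / G i i, ?_, ?_, ?_⟩
  · intro i
    exact div_nonneg (mul_nonneg (hδ i).le (hLnn i)) (hGpos i).le
  · intro i
    have hqi : δ i * L i / G i i * G i i = δ i * L i :=
      div_mul_cancel₀ _ (hGpos i).ne'
    rw [ge_iff_le, hqi]
    have hsum : ∑ j ∈ Finset.univ.erase i, G j i * (δ j * L j / G j j)
        = ∑ j, A j i * L j := by
      rw [← Finset.sum_erase_add Finset.univ (fun j => A j i * L j) (Finset.mem_univ i)]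
      have : A i i * L i = 0 := by simp [hA]
      rw [this, add_zero]
      refine Finset.sum_congr rfl fun j hj => ?_
      simp only [Finset.mem_erase] at hj
      simp only [hA, if_neg (Ne.symm hj.1)]
      field_simp
    rw [hsum, ← hLfix i]
  · have : ∑ i, nn i * (δ i * L i / G i i) = ∑ i, b i * L i := by
      refine Finset.sum_congr rfl fun i _ => ?_
      simp only [hb]
      ring
    rw [this]
    exact hLbud

lemma norm_dot_comm {M : ℕ} (a b : Fin M → ℂ) : ‖star a ⬝ᵥ b‖ = ‖star b ⬝ᵥ a‖ := by
  rw [← norm_star (star a ⬝ᵥ b), star_dotProduct]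
  simp

/-- The downlink and the dual uplink admission-control problems have
equal optimal values. -/
theorem downlink_uplink_duality
    (N M : ℕ) (hN : 0 < N) (hM : 0 < M)
    (h : Fin N → (Fin M → ℂ)) (γ n w : Fin N → ℝ) (P : ℝ)
    (hγ : ∀ i, 0 < γ i) (hn : ∀ i, 0 < n i) (hw : ∀ i, 0 < w i) (hP : 0 < P) :
    sInf {s : ℝ | ∃ (p x : Fin N → ℝ) (u : Fin N → (Fin M → ℂ)),
      (∀ i, 0 ≤ p i) ∧ (∀ i, 0 ≤ x i) ∧ (∀ j, ∑ k, ‖u j k‖ ^ 2 = 1) ∧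
      (∀ i, (p i / M) * ‖star (h i) ⬝ᵥ u i‖ ^ 2 ≥
        (γ i / (1 + x i)) *
          ((∑ j ∈ Finset.univ.erase i, (p j / M) * ‖star (h i) ⬝ᵥ u j‖ ^ 2) + n i)) ∧
      ((1 / (M : ℝ)) * ∑ i, w i * p i ≤ P) ∧
      s = ∑ i, x i}
    = sInf {s : ℝ | ∃ (q x : Fin N → ℝ) (u : Fin N → (Fin M → ℂ)),
      (∀ i, 0 ≤ q i) ∧ (∀ i, 0 ≤ x i) ∧ (∀ j, ∑ k, ‖u j k‖ ^ 2 = 1) ∧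
      (∀ i, (q i / M) * ‖star (u i) ⬝ᵥ h i‖ ^ 2 ≥
        (γ i / (1 + x i)) *
          ((∑ j ∈ Finset.univ.erase i, (q j / M) * ‖star (u i) ⬝ᵥ h j‖ ^ 2) + w i)) ∧
      ((1 / (M : ℝ)) * ∑ i, n i * q i ≤ P) ∧
      s = ∑ i, x i} := by
  have hMpos : (0:ℝ) < M := by exact_mod_cast hM
  congr 1
  ext s
  constructor
  · rintro ⟨p, x, u, hp, hx, hu, hfe, hpw, rfl⟩
    set G : Fin N → Fin N → ℝ := fun i j => ‖star (h i) ⬝ᵥ u j‖ ^ 2 with hGdef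
    set δ : Fin N → ℝ := fun i => γ i / (1 + x i) with hδdef
    have hδ : ∀ i, 0 < δ i := fun i => div_pos (hγ i) (by linarith [hx i])
    obtain ⟨q', hq'0, hq'f, hq'b⟩ := feas_transfer G δ n w P
      (fun i j => by positivity) hδ hn (fun i => (hw i).le)
      (fun i => p i / M) (fun i => div_nonneg (hp i) hMpos.le)
      (by
        intro i
        have e : ∑ j ∈ Finset.univ.erase i, G i j * (p j / M)
            = ∑ j ∈ Finset.univ.erase i, (p j / M) * ‖star (h i) ⬝ᵥ u j‖ ^ 2 :=
          Finset.sum_congr rfl fun j _ => mul_comm _ _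
        rw [e]
        exact hfe i)
      (by
        have e : ∑ i, w i * (p i / M) = (1 / (M : ℝ)) * ∑ i, w i * p i := by
          rw [Finset.mul_sum]
          exact Finset.sum_congr rfl fun i _ => by ring
        rw [e]
        exact hpw)
    refine ⟨fun i => M * q' i, x, u, fun i => mul_nonneg hMpos.le (hq'0 i), hx, hu, ?_, ?_, rfl⟩
    · intro i
      have ediv : ∀ j, (M : ℝ) * q' j / M = q' j := fun j =>
        mul_div_cancel_left₀ _ hMpos.ne'
      have enorm : ∀ j, ‖star (u i) ⬝ᵥ h j‖ ^ 2 = G j i := fun j => by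
        rw [hGdef]; rw [norm_dot_comm]
      have e : ∑ j ∈ Finset.univ.erase i, ((M : ℝ) * q' j / M) * ‖star (u i) ⬝ᵥ h j‖ ^ 2
          = ∑ j ∈ Finset.univ.erase i, G j i * q' j :=
        Finset.sum_congr rfl fun j _ => by rw [ediv j, enorm j, mul_comm]
      rw [ediv i, enorm i, e]
      exact hq'f i
    · have e : (1 / (M : ℝ)) * ∑ i, n i * ((M : ℝ) * q' i) = ∑ i, n i * q' i := by
        rw [Finset.mul_sum]
        refine Finset.sum_congr rfl fun i _ => ?_
        field_simp
      rw [e]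
      exact hq'b
  · rintro ⟨q, x, u, hq, hx, hu, hfe, hpw, rfl⟩
    set G : Fin N → Fin N → ℝ := fun i j => ‖star (h j) ⬝ᵥ u i‖ ^ 2 with hGdef
    set δ : Fin N → ℝ := fun i => γ i / (1 + x i) with hδdef
    have hδ : ∀ i, 0 < δ i := fun i => div_pos (hγ i) (by linarith [hx i])
    obtain ⟨p', hp'0, hp'f, hp'b⟩ := feas_transfer G δ w n P
      (fun i j => by positivity) hδ hw (fun i => (hn i).le)
      (fun i => q i / M) (fun i => div_nonneg (hq i) hMpos.le)
      (by
        intro i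
        have enorm : ∀ j, G i j = ‖star (u i) ⬝ᵥ h j‖ ^ 2 := fun j => by
          rw [hGdef]; rw [norm_dot_comm]
        have e : ∑ j ∈ Finset.univ.erase i, G i j * (q j / M)
            = ∑ j ∈ Finset.univ.erase i, (q j / M) * ‖star (u i) ⬝ᵥ h j‖ ^ 2 :=
          Finset.sum_congr rfl fun j _ => by rw [enorm j, mul_comm]
        rw [e, enorm i]
        exact hfe i)
      (by
        have e : ∑ i, n i * (q i / M) = (1 / (M : ℝ)) * ∑ i, n i * q i := by
          rw [Finset.mul_sum]
          exact Finset.sum_congr rfl fun i _ => by ring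
        rw [e]
        exact hpw)
    refine ⟨fun i => M * p' i, x, u, fun i => mul_nonneg hMpos.le (hp'0 i), hx, hu, ?_, ?_, rfl⟩
    · intro i
      have ediv : ∀ j, (M : ℝ) * p' j / M = p' j := fun j =>
        mul_div_cancel_left₀ _ hMpos.ne'
      have e : ∑ j ∈ Finset.univ.erase i, ((M : ℝ) * p' j / M) * ‖star (h i) ⬝ᵥ u j‖ ^ 2
          = ∑ j ∈ Finset.univ.erase i, G j i * p' j :=
        Finset.sum_congr rfl fun j _ => by rw [ediv j, mul_comm]
      rw [ediv i, e]
      exact hp'f i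
    · have e : (1 / (M : ℝ)) * ∑ i, w i * ((M : ℝ) * p' i) = ∑ i, w i * p' i := by
        rw [Finset.mul_sum]
        refine Finset.sum_congr rfl fun i _ => ?_
        field_simp
      rw [e]
      exact hp'b
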